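/- Let F ⊣ G be an adjunction between categories C and D admitting filtered colimits, where G : D → C preserves filtered colimits and is conservative. If C is compactly generated (generated under filtered colimits by a set of compact objects), then D is compactly generated, with generators the images under F of the compact generators of C. -/

import Mathlib

open CategoryTheory Limits

universe v u₁ u₂

/-- An object `X` is compact if `Hom(X, −)` commutes with filtered colimits. -/
def IsCompactObj {C : Type u₁} [Category.{v} C] (X : C) : Prop :=
  ∀ (J : Type v) (_ : SmallCategory J) (_ : IsFiltered J),
    Nonempty (PreservesColimitsOfShape J (coyoneda.obj (Opposite.op X)))

/-- A set of objects `S` generates `C`: a morphism is an isomorphism as soon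
as `Hom(s, −)` takes it to a bijection for every `s ∈ S`. -/
def IsGeneratingSet {C : Type u₁} [Category.{v} C] (S : Set C) : Prop :=
  ∀ (X Y : C) (f : X ⟶ Y),
    (∀ s ∈ S, Function.Bijective (fun g : s ⟶ X => g ≫ f)) → IsIso f

/-- If `F ⊣ G` with `G` preserving filtered colimits and conservative, and `C`
is compactly generated by a set `S` of compact objects, then `D` is compactly
generated by the image of `S` under `F`. -/
theorem stmt14 {C : Type u₁} {D : Type u₂} [Category.{v} C] [Category.{v} D]
    [HasFilteredColimits C] [HasFilteredColimits D]
    (F : C ⥤ D) (G : D ⥤ C) (adj : F ⊣ G)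
    (hGcont : ∀ (J : Type v) (_ : SmallCategory J) (_ : IsFiltered J),
      Nonempty (PreservesColimitsOfShape J G))
    [G.ReflectsIsomorphisms]
    (S : Set C) (hcpt : ∀ s ∈ S, IsCompactObj s) (hgen : IsGeneratingSet S) :
    (∀ s ∈ S, IsCompactObj (F.obj s)) ∧ IsGeneratingSet (F.obj '' S) := by
  constructor
  · intro s hs J _ _
    obtain ⟨hG⟩ := hGcont J _ ‹_›
    obtain ⟨hs'⟩ := hcpt s hs J _ ‹_›
    have : PreservesColimitsOfShape J (G ⋙ coyoneda.obj (Opposite.op s)) :=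
      comp_preservesColimitsOfShape _ _
    exact ⟨preservesColimitsOfShape_of_natIso (adj.corepresentableBy s).toIso.symm⟩
  · intro X Y f hf
    have : IsIso (G.map f) := by
      apply hgen
      intro s hs
      have h := hf (F.obj s) ⟨s, hs, rfl⟩
      have key : (fun g : s ⟶ G.obj X => g ≫ G.map f) =
          (adj.homEquiv s Y) ∘ (fun g : F.obj s ⟶ X => g ≫ f) ∘ (adj.homEquiv s X).symm := by
        funext g
        simp [Adjunction.homEquiv_naturality_right]
      rw [key]
      exact (adj.homEquiv s Y).bijective.comp (h.comp (adj.homEquiv s X).symm.bijective)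
    exact isIso_of_reflects_iso f G
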